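/- For D₂ (with positive roots α₁ = ε₁−ε₂, α₂ = ε₁+ε₂ and order comparing (p₂,p₁) lexicographically), the semigroup of essential signatures is exactly the set of (kω₁ + lω₂; p₁, p₂) with k, l, p₁, p₂ ∈ ℤ_{≥0}, p₁ ≤ k, p₂ ≤ l; it is generated by the essential signatures of fundamental highest weights (ω₁; 0,0), (ω₁; 1,0), (ω₂; 0,0), (ω₂; 0,1), each element has a unique such decomposition, and the semigroup is saturated in ℤ² ⊕ ℤ². -/

import Mathlib

open scoped TensorProduct

/-- The lowering operator of the `(m+1)`-dimensional irreducible `sl₂`-module: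
`f · vᵢ = v_{i+1}`. -/
def lowerOp (m : ℕ) : Module.End ℂ (Fin (m + 1) → ℂ) where
  toFun v i := if h : i.val = 0 then 0 else v ⟨i.val - 1, by omega⟩
  map_add' x y := by funext i; by_cases h : i = 0 <;> simp [h]
  map_smul' c x := by funext i; by_cases h : i = 0 <;> simp [h]

/-- `e_{−α₁} = f ⊗ 1` acting on `V(kω₁+lω₂) ≅ V_{sl₂}(k) ⊗ V_{sl₂}(l)`. -/
noncomputable def Eneg1 (k l : ℕ) :
    Module.End ℂ ((Fin (k + 1) → ℂ) ⊗[ℂ] (Fin (l + 1) → ℂ)) :=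
  TensorProduct.map (lowerOp k) LinearMap.id

/-- `e_{−α₂} = 1 ⊗ f`. -/
noncomputable def Eneg2 (k l : ℕ) :
    Module.End ℂ ((Fin (k + 1) → ℂ) ⊗[ℂ] (Fin (l + 1) → ℂ)) :=
  TensorProduct.map LinearMap.id (lowerOp l)

/-- The vector `v(σ) = e_{−α₁}^{p₁} e_{−α₂}^{p₂} · v_λ` of the signature
`σ = (kω₁+lω₂; p₁, p₂)`. -/
noncomputable def vecD2 (k l : ℕ) (p : ℕ × ℕ) :
    (Fin (k + 1) → ℂ) ⊗[ℂ] (Fin (l + 1) → ℂ) :=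
  ((Eneg1 k l) ^ p.1 * (Eneg2 k l) ^ p.2)
    ((Pi.single 0 1 : Fin (k + 1) → ℂ) ⊗ₜ[ℂ] (Pi.single 0 1 : Fin (l + 1) → ℂ))

/-- The monomial order for `D₂`: compare the tuples `(p₂, p₁)` lexicographically. -/
def ltD2 (p q : ℕ × ℕ) : Prop := p.2 < q.2 ∨ (p.2 = q.2 ∧ p.1 < q.1)

/-- A signature `(kω₁+lω₂; p₁, p₂)` is essential if its vector is not in the span
of the vectors of smaller signatures (of the same highest weight). -/
def EssentialD2 (k l : ℕ) (p : ℕ × ℕ) : Prop :=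
  vecD2 k l p ∉ Submodule.span ℂ {x | ∃ q, ltD2 q p ∧ x = vecD2 k l q}


lemma lowerOp_apply (m : ℕ) (v : Fin (m+1) → ℂ) (i : Fin (m+1)) :
    lowerOp m v i = if h : i.val = 0 then 0 else v ⟨i.val - 1, by omega⟩ := rfl

lemma lowerOp_pow_single (m p : ℕ) :
    ((lowerOp m) ^ p) (Pi.single 0 1 : Fin (m+1) → ℂ) =
      if h : p ≤ m then Pi.single ⟨p, by omega⟩ 1 else 0 := by
  induction p with
  | zero =>
    simp only [pow_zero, Module.End.one_apply, Nat.zero_le, dif_pos]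
    congr
  | succ p ih =>
    rw [pow_succ', Module.End.mul_apply, ih]
    by_cases hp : p ≤ m
    · rw [dif_pos hp]
      by_cases hp1 : p + 1 ≤ m
      · rw [dif_pos hp1]
        funext i
        rw [lowerOp_apply]
        by_cases hi : i.val = 0
        · rw [dif_pos hi, Pi.single_apply, if_neg (by simp [Fin.ext_iff]; omega)]
        · rw [dif_neg hi, Pi.single_apply, Pi.single_apply]
          simp only [Fin.ext_iff]
          by_cases h : i.val = p + 1
          · rw [if_pos (by omega), if_pos (by omega)]
          · rw [if_neg (by omega), if_neg (by omega)]
      · rw [dif_neg hp1]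
        funext i
        rw [lowerOp_apply]
        by_cases hi : i.val = 0
        · rw [dif_pos hi]; rfl
        · rw [dif_neg hi, Pi.single_apply, if_neg (by simp [Fin.ext_iff]; omega)]
          rfl
    · rw [dif_neg hp, dif_neg (by omega), map_zero]

lemma Eneg1_pow_tmul (k l n : ℕ) (a : Fin (k+1) → ℂ) (b : Fin (l+1) → ℂ) :
    ((Eneg1 k l) ^ n) (a ⊗ₜ[ℂ] b) = (((lowerOp k) ^ n) a) ⊗ₜ[ℂ] b := by
  induction n with
  | zero => simp
  | succ n ih =>
    rw [pow_succ', Module.End.mul_apply, ih, Eneg1, TensorProduct.map_tmul,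
      pow_succ', Module.End.mul_apply, LinearMap.id_apply]

lemma Eneg2_pow_tmul (k l n : ℕ) (a : Fin (k+1) → ℂ) (b : Fin (l+1) → ℂ) :
    ((Eneg2 k l) ^ n) (a ⊗ₜ[ℂ] b) = a ⊗ₜ[ℂ] (((lowerOp l) ^ n) b) := by
  induction n with
  | zero => simp
  | succ n ih =>
    rw [pow_succ', Module.End.mul_apply, ih, Eneg2, TensorProduct.map_tmul,
      pow_succ', Module.End.mul_apply, LinearMap.id_apply]

lemma vecD2_eq (k l : ℕ) (p : ℕ × ℕ) :
    vecD2 k l p = if h : p.1 ≤ k ∧ p.2 ≤ l then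
      (Pi.single ⟨p.1, by omega⟩ 1 : Fin (k+1) → ℂ) ⊗ₜ[ℂ]
        (Pi.single ⟨p.2, by omega⟩ 1 : Fin (l+1) → ℂ) else 0 := by
  rw [vecD2, Module.End.mul_apply, Eneg2_pow_tmul, Eneg1_pow_tmul,
    lowerOp_pow_single, lowerOp_pow_single]
  by_cases h1 : p.1 ≤ k <;> by_cases h2 : p.2 ≤ l <;>
    simp [h1, h2, TensorProduct.zero_tmul, TensorProduct.tmul_zero]

noncomputable def basD2 (k l : ℕ) :
    Module.Basis (Fin (k+1) × Fin (l+1)) ℂ ((Fin (k + 1) → ℂ) ⊗[ℂ] (Fin (l + 1) → ℂ)) :=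
  (Pi.basisFun ℂ (Fin (k+1))).tensorProduct (Pi.basisFun ℂ (Fin (l+1)))

lemma basD2_apply (k l : ℕ) (i : Fin (k+1)) (j : Fin (l+1)) :
    basD2 k l (i, j) = (Pi.single i 1 : Fin (k+1) → ℂ) ⊗ₜ[ℂ]
      (Pi.single j 1 : Fin (l+1) → ℂ) := by
  rw [basD2, Module.Basis.tensorProduct_apply, Pi.basisFun_apply, Pi.basisFun_apply]

lemma essential_iff (k l p₁ p₂ : ℕ) :
    EssentialD2 k l (p₁, p₂) ↔ (p₁ ≤ k ∧ p₂ ≤ l) := by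
  constructor
  · intro h
    by_contra hc
    apply h
    have : vecD2 k l (p₁, p₂) = 0 := by rw [vecD2_eq]; exact dif_neg hc
    rw [this]; exact Submodule.zero_mem _
  · rintro ⟨h1, h2⟩ hmem
    set i : Fin (k+1) × Fin (l+1) := (⟨p₁, by omega⟩, ⟨p₂, by omega⟩) with hi
    have hv : vecD2 k l (p₁, p₂) = basD2 k l i := by
      rw [vecD2_eq, dif_pos ⟨h1, h2⟩, basD2_apply]
    have hle : Submodule.span ℂ {x | ∃ q, ltD2 q (p₁, p₂) ∧ x = vecD2 k l q} ≤
        Submodule.span ℂ (basD2 k l '' {j | j ≠ i}) := by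
      rw [Submodule.span_le]
      rintro x ⟨q, hq, rfl⟩
      rw [vecD2_eq]
      by_cases hr : q.1 ≤ k ∧ q.2 ≤ l
      · rw [dif_pos hr]
        apply Submodule.subset_span
        refine ⟨(⟨q.1, by omega⟩, ⟨q.2, by omega⟩), ?_, by rw [basD2_apply]⟩
        simp only [Set.mem_setOf_eq, hi, ne_eq, Prod.mk.injEq, Fin.mk.injEq, not_and]
        rcases hq with h | ⟨h, h'⟩ <;> omega
      · rw [dif_neg hr]; exact Submodule.zero_mem _
    have := (basD2 k l).linearIndependent.notMem_span_image
      (s := {j | j ≠ i}) (x := i) (by simp)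
    exact this (hle (hv ▸ hmem))

/-- For `D₂`: the semigroup of essential signatures
`(kω₁+lω₂; p₁, p₂)` is exactly `{p₁ ≤ k ∧ p₂ ≤ l}`; it is generated by the
essential signatures of fundamental highest weights `(ω₁;0,0)`, `(ω₁;1,0)`,
`(ω₂;0,0)`, `(ω₂;0,1)`; the decomposition is unique; and the semigroup is
saturated in `ℤ² ⊕ ℤ²`.  Tuples are recorded as `(k, l, p₁, p₂)`. -/
theorem stmt_17 :
    (∀ k l p₁ p₂ : ℕ, EssentialD2 k l (p₁, p₂) ↔ (p₁ ≤ k ∧ p₂ ≤ l)) ∧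
    (∀ x : ℕ × ℕ × ℕ × ℕ,
      x ∈ AddSubmonoid.closure
          ({(1, 0, 0, 0), (1, 0, 1, 0), (0, 1, 0, 0), (0, 1, 0, 1)} :
            Set (ℕ × ℕ × ℕ × ℕ)) ↔
        (x.2.2.1 ≤ x.1 ∧ x.2.2.2 ≤ x.2.1)) ∧
    (∀ a b c d a' b' c' d' : ℕ,
      a • ((1, 0, 0, 0) : ℕ × ℕ × ℕ × ℕ) + b • (1, 0, 1, 0) +
          c • (0, 1, 0, 0) + d • (0, 1, 0, 1) =
        a' • ((1, 0, 0, 0) : ℕ × ℕ × ℕ × ℕ) + b' • (1, 0, 1, 0) +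
          c' • (0, 1, 0, 0) + d' • (0, 1, 0, 1) →
      a = a' ∧ b = b' ∧ c = c' ∧ d = d') ∧
    (∀ (x : ℤ × ℤ × ℤ × ℤ) (m : ℕ), 0 < m →
      (0 ≤ ((m : ℤ) • x).2.2.1 ∧ ((m : ℤ) • x).2.2.1 ≤ ((m : ℤ) • x).1 ∧
        0 ≤ ((m : ℤ) • x).2.2.2 ∧ ((m : ℤ) • x).2.2.2 ≤ ((m : ℤ) • x).2.1) →
      (0 ≤ x.2.2.1 ∧ x.2.2.1 ≤ x.1 ∧ 0 ≤ x.2.2.2 ∧ x.2.2.2 ≤ x.2.1)) := by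
  refine ⟨essential_iff, ?_, ?_, ?_⟩
  · intro x
    constructor
    · intro hx
      induction hx using AddSubmonoid.closure_induction with
      | mem y hy =>
        rcases hy with h | h | h | h <;> subst h <;> simp
      | zero => simp
      | add a b _ _ ha hb =>
        obtain ⟨a1, a2, a3, a4⟩ := a
        obtain ⟨b1, b2, b3, b4⟩ := b
        simp only [Prod.mk_add_mk] at *
        omega
    · rintro ⟨h1, h2⟩
      obtain ⟨k, l, p₁, p₂⟩ := x
      simp only at h1 h2
      have hx : (k, l, p₁, p₂) = (k - p₁) • ((1, 0, 0, 0) : ℕ × ℕ × ℕ × ℕ) +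
          p₁ • (1, 0, 1, 0) + (l - p₂) • (0, 1, 0, 0) + p₂ • (0, 1, 0, 1) := by
        simp only [Prod.smul_mk, smul_eq_mul, Prod.mk_add_mk, Prod.mk.injEq]
        omega
      rw [hx]
      refine add_mem (add_mem (add_mem ?_ ?_) ?_) ?_ <;>
      · apply AddSubmonoid.nsmul_mem
        apply AddSubmonoid.subset_closure
        norm_num
  · intro a b c d a' b' c' d' h
    simp only [Prod.smul_mk, smul_eq_mul, Prod.mk_add_mk, Prod.mk.injEq] at h
    omega
  · rintro ⟨x1, x2, x3, x4⟩ m hm ⟨h1, h2, h3, h4⟩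
    simp only [Prod.smul_mk, smul_eq_mul] at h1 h2 h3 h4
    have hm' : (0 : ℤ) < (m : ℤ) := by exact_mod_cast hm
    refine ⟨?_, ?_, ?_, ?_⟩ <;> simp only [] <;> nlinarith
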